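/- Let X have a bivariate elliptical distribution F ∈ E_2(μ,V) on ℝ², and let V = U Λ U^T be an eigenvalue decomposition of V with U orthogonal and Λ = diag(λ_1,λ_2), 0 < λ_2 ≤ λ_1. Then the spatial sign covariance matrix satisfies S(F) = U Δ U^T with Δ = diag(δ_1,δ_2), where δ_j = √λ_j/(√λ_1 + √λ_2) for j = 1,2. -/

import Mathlib

open MeasureTheory Matrix Real

/-- The spatial sign s(x) = x/‖x‖ for x ≠ 0, and s(0) = 0. -/
noncomputable def ssign {p : ℕ} (x : EuclideanSpace ℝ (Fin p)) : EuclideanSpace ℝ (Fin p) :=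
  haveI := Classical.propDecidable (x = 0)
  if x = 0 then 0 else ‖x‖⁻¹ • x

section Calculus

lemma sscm_dpos {k : ℝ} (hk : 0 < k) (t : ℝ) : 0 < cos t ^ 2 + k * sin t ^ 2 := by
  rcases eq_or_ne (sin t) 0 with h | h
  · have h2 := sin_sq_add_cos_sq t
    rw [h] at h2; nlinarith
  · have : 0 < sin t ^ 2 := by positivity
    nlinarith [sq_nonneg (cos t), mul_pos hk this]

lemma sscm_dpos2 {k : ℝ} (hk : 0 < k) (t : ℝ) : 0 < cos t ^ 2 + k ^ 2 * sin t ^ 2 := by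
  have := sscm_dpos (mul_pos hk hk) t
  nlinarith

lemma sscm_ident1 (k s c : ℝ) (h : s^2 + c^2 = 1)
    (hd : 0 < c ^ 2 + k * s ^ 2) (hd2 : 0 < c ^ 2 + k ^ 2 * s ^ 2) :
    k / (c ^ 2 + k ^ 2 * s ^ 2)
      = 1 + 1 / (1 + ((k - 1) * (s * c) / (c ^ 2 + k * s ^ 2)) ^ 2)
        * (((k - 1) * (c * c + s * -s)) * (c ^ 2 + k * s ^ 2)
            - (k - 1) * (s * c) * (2 * c * -s + k * (2 * s * c))) / (c ^ 2 + k * s ^ 2) ^ 2 := by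
  have h1 : (0:ℝ) < 1 + ((k - 1) * (s * c) / (c ^ 2 + k * s ^ 2)) ^ 2 := by positivity
  have e2 : s^2 = 1 - c^2 := by linarith
  have e4 : s^4 = (1-c^2)^2 := by rw [show s^4 = (s^2)^2 by ring, e2]
  have e6 : s^6 = (1-c^2)^3 := by rw [show s^6 = (s^2)^3 by ring, e2]
  have e8 : s^8 = (1-c^2)^4 := by rw [show s^8 = (s^2)^4 by ring, e2]
  have e10 : s^10 = (1-c^2)^5 := by rw [show s^10 = (s^2)^5 by ring, e2]
  field_simp
  ring_nf
  simp only [e2, e4, e6, e8, e10]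
  ring

lemma sscm_hasDerivAt_H {k : ℝ} (hk : 0 < k) (t : ℝ) :
    HasDerivAt (fun t => t + arctan ((k - 1) * (sin t * cos t) / (cos t ^ 2 + k * sin t ^ 2)))
      (k / (cos t ^ 2 + k ^ 2 * sin t ^ 2)) t := by
  have hd := sscm_dpos hk t
  have hn : HasDerivAt (fun t => (k - 1) * (sin t * cos t))
      ((k - 1) * (cos t * cos t + sin t * -sin t)) t :=
    ((hasDerivAt_sin t).mul (hasDerivAt_cos t)).const_mul _
  have hden : HasDerivAt (fun t => cos t ^ 2 + k * sin t ^ 2)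
      (2 * cos t * -sin t + k * (2 * sin t * cos t)) t := by
    have h1 := (hasDerivAt_cos t).pow 2
    have h2 := ((hasDerivAt_sin t).pow 2).const_mul k
    exact (h1.add h2).congr_deriv (by ring)
  have hq := hn.div hden (ne_of_gt hd)
  have harc := (Real.hasDerivAt_arctan
    ((k - 1) * (sin t * cos t) / (cos t ^ 2 + k * sin t ^ 2))).comp t hq
  have htot := (hasDerivAt_id t).add harc
  refine htot.congr_deriv ?_
  have := sscm_ident1 k (sin t) (cos t) (sin_sq_add_cos_sq t) hd (sscm_dpos2 hk t)
  rw [this]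
  ring

lemma sscm_integral_J {k : ℝ} (hk : 0 < k) :
    ∫ t in (-π)..π, k / (cos t ^ 2 + k ^ 2 * sin t ^ 2) = 2 * π := by
  have hcont : Continuous (fun t : ℝ => k / (cos t ^ 2 + k ^ 2 * sin t ^ 2)) := by
    apply continuous_const.div
    · continuity
    · exact fun t => ne_of_gt (sscm_dpos2 hk t)
  have h := intervalIntegral.integral_eq_sub_of_hasDerivAt (f := fun t =>
      t + arctan ((k - 1) * (sin t * cos t) / (cos t ^ 2 + k * sin t ^ 2)))
    (fun t _ => sscm_hasDerivAt_H hk t) (hcont.intervalIntegrable (-π) π)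
  rw [h]
  simp [Real.sin_pi]
  ring

lemma sscm_Dpq_pos {p q : ℝ} (hp : 0 < p) (hq : 0 < q) (t : ℝ) :
    0 < p ^ 2 * cos t ^ 2 + q ^ 2 * sin t ^ 2 := by
  have h1 := sscm_dpos (k := q ^ 2 / p ^ 2) (by positivity) t
  have h2 : p ^ 2 * (cos t ^ 2 + q ^ 2 / p ^ 2 * sin t ^ 2)
      = p ^ 2 * cos t ^ 2 + q ^ 2 * sin t ^ 2 := by
    field_simp
  nlinarith [mul_pos (pow_pos hp 2) h1]

lemma sscm_integral_M00 {p q : ℝ} (hq : 0 < q) (hpq : q ≤ p) :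
    ∫ t in (-π)..π, p ^ 2 * cos t ^ 2 / (p ^ 2 * cos t ^ 2 + q ^ 2 * sin t ^ 2)
      = 2 * π * p / (p + q) := by
  have hp : 0 < p := lt_of_lt_of_le hq hpq
  rcases eq_or_lt_of_le hpq with heq | hlt
  · rw [← heq]
    have : ∀ t : ℝ, q ^ 2 * cos t ^ 2 / (q ^ 2 * cos t ^ 2 + q ^ 2 * sin t ^ 2) = cos t ^ 2 := by
      intro t
      rw [show q ^ 2 * cos t ^ 2 + q ^ 2 * sin t ^ 2 = q ^ 2 * (sin t ^ 2 + cos t ^ 2) by ring,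
        sin_sq_add_cos_sq]
      field_simp
    rw [intervalIntegral.integral_congr (fun t _ => this t), integral_cos_sq]
    field_simp
    simp [Real.sin_neg, Real.sin_pi]
    ring
  · set k := q / p with hk
    have hkpos : 0 < k := by positivity
    have hppq : (0:ℝ) < p ^ 2 - q ^ 2 := by nlinarith
    have hptwise : ∀ t : ℝ, p ^ 2 * cos t ^ 2 / (p ^ 2 * cos t ^ 2 + q ^ 2 * sin t ^ 2)
        = p ^ 2 / (p ^ 2 - q ^ 2)
          - p * q / (p ^ 2 - q ^ 2) * (k / (cos t ^ 2 + k ^ 2 * sin t ^ 2)) := by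
      intro t
      have hD := sscm_Dpq_pos hp hq t
      have hDk := sscm_dpos (k := k ^ 2) (by positivity) t
      have e2 : sin t ^ 2 = 1 - cos t ^ 2 := by nlinarith [sin_sq_add_cos_sq t]
      have e4 : sin t ^ 4 = (1 - cos t ^ 2) ^ 2 := by
        rw [show sin t ^ 4 = (sin t ^ 2) ^ 2 by ring, e2]
      have hstep : k / (cos t ^ 2 + k ^ 2 * sin t ^ 2)
          = p * q / (p ^ 2 * cos t ^ 2 + q ^ 2 * sin t ^ 2) := by
        rw [div_eq_div_iff hDk.ne' hD.ne', hk]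
        field_simp
      rw [hstep]
      field_simp
      ring_nf
      simp only [e2, e4]
      ring
    rw [intervalIntegral.integral_congr (fun t _ => hptwise t)]
    have hint : IntervalIntegrable (fun t => k / (cos t ^ 2 + k ^ 2 * sin t ^ 2))
        MeasureTheory.volume (-π) π := by
      apply Continuous.intervalIntegrable
      apply continuous_const.div
      · continuity
      · exact fun t => ne_of_gt (sscm_dpos (k := k ^ 2) (by positivity) t)
    rw [intervalIntegral.integral_sub intervalIntegrable_const (hint.const_mul _),
      intervalIntegral.integral_const, intervalIntegral.integral_const_mul, sscm_integral_J hkpos]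
    have hsum : p + q ≠ 0 := by positivity
    have hpq2 : p ^ 2 - q ^ 2 ≠ 0 := hppq.ne'
    rw [smul_eq_mul]
    field_simp
    ring

lemma sscm_integral_M11 {p q : ℝ} (hq : 0 < q) (hpq : q ≤ p) :
    ∫ t in (-π)..π, q ^ 2 * sin t ^ 2 / (p ^ 2 * cos t ^ 2 + q ^ 2 * sin t ^ 2)
      = 2 * π * q / (p + q) := by
  have hp : 0 < p := lt_of_lt_of_le hq hpq
  have hptwise : ∀ t : ℝ, q ^ 2 * sin t ^ 2 / (p ^ 2 * cos t ^ 2 + q ^ 2 * sin t ^ 2)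
      = 1 - p ^ 2 * cos t ^ 2 / (p ^ 2 * cos t ^ 2 + q ^ 2 * sin t ^ 2) := by
    intro t
    have hD := sscm_Dpq_pos hp hq t
    field_simp
    ring
  rw [intervalIntegral.integral_congr (fun t _ => hptwise t)]
  have hint : IntervalIntegrable
      (fun t => p ^ 2 * cos t ^ 2 / (p ^ 2 * cos t ^ 2 + q ^ 2 * sin t ^ 2))
      MeasureTheory.volume (-π) π := by
    apply Continuous.intervalIntegrable
    apply Continuous.div
    · continuity
    · continuity
    · exact fun t => ne_of_gt (sscm_Dpq_pos hp hq t)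
  rw [intervalIntegral.integral_sub intervalIntegrable_const hint,
    intervalIntegral.integral_const, sscm_integral_M00 hq hpq]
  have hsum : p + q ≠ 0 := by positivity
  field_simp
  ring

lemma sscm_integral_M01 {p q : ℝ} (hq : 0 < q) (hpq : q ≤ p) :
    ∫ t in (-π)..π, p * cos t * (q * sin t) / (p ^ 2 * cos t ^ 2 + q ^ 2 * sin t ^ 2) = 0 := by
  have hp : 0 < p := lt_of_lt_of_le hq hpq
  set f := fun t => p * cos t * (q * sin t) / (p ^ 2 * cos t ^ 2 + q ^ 2 * sin t ^ 2) with hf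
  have hodd : ∀ t, f (-t) = - f t := by
    intro t
    simp only [hf, Real.cos_neg, Real.sin_neg]
    ring
  have h1 : (∫ t in (-π)..π, f (-t)) = ∫ t in (-π)..π, f t := by
    rw [intervalIntegral.integral_comp_neg]
    norm_num
  simp only [hodd] at h1
  rw [intervalIntegral.integral_neg] at h1
  linarith

end Calculus

section Support

lemma fin2cases (i : Fin 2) : i = 0 ∨ i = 1 := by omega

lemma ssign_eq {p : ℕ} (x : EuclideanSpace ℝ (Fin p)) : ssign x = ‖x‖⁻¹ • x := by
  by_cases h : x = 0
  · simp [ssign, h]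
  · simp [ssign, h]

lemma ssign_apply_mul (v : EuclideanSpace ℝ (Fin 2)) (i j : Fin 2) :
    ssign v i * ssign v j = v i * v j / (v 0 ^ 2 + v 1 ^ 2) := by
  rw [ssign_eq]
  have hS : (0:ℝ) ≤ v 0 ^ 2 + v 1 ^ 2 := by positivity
  have hn : ‖v‖ = Real.sqrt (v 0 ^ 2 + v 1 ^ 2) := by
    rw [EuclideanSpace.norm_eq]
    simp [Fin.sum_univ_two, sq_abs]
  have hcoord : ∀ k : Fin 2, (‖v‖⁻¹ • v) k = ‖v‖⁻¹ * v k := fun k => rfl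
  rw [hcoord, hcoord, hn]
  have : (Real.sqrt (v 0 ^ 2 + v 1 ^ 2))⁻¹ * v i * ((Real.sqrt (v 0 ^ 2 + v 1 ^ 2))⁻¹ * v j)
      = v i * v j * (Real.sqrt (v 0 ^ 2 + v 1 ^ 2) * Real.sqrt (v 0 ^ 2 + v 1 ^ 2))⁻¹ := by
    rw [mul_inv]; ring
  rw [this, Real.mul_self_sqrt hS, div_eq_mul_inv]

lemma Gf_abs_le_one (v : EuclideanSpace ℝ (Fin 2)) (i j : Fin 2) :
    |v i * v j / (v 0 ^ 2 + v 1 ^ 2)| ≤ 1 := by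
  have hS : (0:ℝ) ≤ v 0 ^ 2 + v 1 ^ 2 := by positivity
  have hvi : v i ^ 2 ≤ v 0 ^ 2 + v 1 ^ 2 := by
    rcases fin2cases i with rfl | rfl <;> nlinarith [sq_nonneg (v 0), sq_nonneg (v 1)]
  have hvj : v j ^ 2 ≤ v 0 ^ 2 + v 1 ^ 2 := by
    rcases fin2cases j with rfl | rfl <;> nlinarith [sq_nonneg (v 0), sq_nonneg (v 1)]
  rcases eq_or_lt_of_le hS with h0 | h0
  · rw [← h0]; norm_num
  · rw [abs_div, div_le_one (by rwa [abs_of_pos h0])]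
    rw [abs_of_pos h0, abs_mul]
    nlinarith [abs_nonneg (v i), abs_nonneg (v j), sq_abs (v i), sq_abs (v j),
      sq_nonneg (|v i| - |v j|)]

lemma exists_angle (x y : ℝ) (h : x^2 + y^2 = 1) : ∃ φ : ℝ, cos φ = x ∧ sin φ = y := by
  have hx1 : -1 ≤ x := by nlinarith [sq_nonneg y]
  have hx2 : x ≤ 1 := by nlinarith [sq_nonneg y]
  have hsq : Real.sqrt (1 - x^2) = |y| := by
    rw [show 1 - x^2 = y^2 by linarith, Real.sqrt_sq_eq_abs]
  rcases le_or_gt 0 y with hy | hy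
  · exact ⟨arccos x, Real.cos_arccos hx1 hx2, by rw [Real.sin_arccos, hsq, abs_of_nonneg hy]⟩
  · exact ⟨-arccos x, by rw [Real.cos_neg]; exact Real.cos_arccos hx1 hx2,
      by rw [Real.sin_neg, Real.sin_arccos, hsq, abs_of_neg hy]; ring⟩

lemma quadform (W M : Matrix (Fin 2) (Fin 2) ℝ) (x : Fin 2 → ℝ) :
    ∑ i, ∑ j, (M *ᵥ x) i * W i j * (M *ᵥ x) j = ∑ i, ∑ j, x i * (Mᵀ * W * M) i j * x j := by
  simp [Fin.sum_univ_two, Matrix.mulVec, dotProduct, Matrix.mul_apply,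
    Matrix.transpose_apply]
  ring

lemma map_withDensity_equiv {α β : Type*} [MeasurableSpace α] [MeasurableSpace β]
    (μ : Measure α) (e : α ≃ᵐ β) (h : β → ENNReal) :
    (μ.withDensity (fun x => h (e x))).map e = (μ.map e).withDensity h := by
  ext s hs
  rw [MeasurableEquiv.map_apply, withDensity_apply _ hs,
    withDensity_apply _ (e.measurable hs), Measure.restrict_map e.measurable hs,
    lintegral_map_equiv h e]

noncomputable def matEquiv (M : Matrix (Fin 2) (Fin 2) ℝ) (h : IsUnit M.det) :
    EuclideanSpace ℝ (Fin 2) ≃ᵐ EuclideanSpace ℝ (Fin 2) :=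
  (LinearEquiv.ofLinear (Matrix.toEuclideanLin M) (Matrix.toEuclideanLin M⁻¹)
    (by
      ext x
      simp only [LinearMap.coe_comp, Function.comp_apply, Matrix.toEuclideanLin_apply, Matrix.mulVec_mulVec, Matrix.mul_nonsing_inv M h, Matrix.one_mulVec, LinearMap.id_apply, WithLp.ofLp_toLp])
    (by
      ext x
      simp only [LinearMap.coe_comp, Function.comp_apply, Matrix.toEuclideanLin_apply, Matrix.mulVec_mulVec, Matrix.nonsing_inv_mul M h, Matrix.one_mulVec, LinearMap.id_apply, WithLp.ofLp_toLp]
      )).toContinuousLinearEquiv.toHomeomorph.toMeasurableEquiv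

lemma matEquiv_apply (M : Matrix (Fin 2) (Fin 2) ℝ) (h : IsUnit M.det)
    (x : EuclideanSpace ℝ (Fin 2)) (k : Fin 2) : matEquiv M h x k = (M *ᵥ x) k := rfl

lemma det_toEuclideanLin (M : Matrix (Fin 2) (Fin 2) ℝ) :
    LinearMap.det (Matrix.toEuclideanLin M : EuclideanSpace ℝ (Fin 2) →ₗ[ℝ]
      EuclideanSpace ℝ (Fin 2)) = M.det := by
  rw [Matrix.toEuclideanLin_eq_toLin, LinearMap.det_toLin]

lemma map_matEquiv_volume (M : Matrix (Fin 2) (Fin 2) ℝ) (h : IsUnit M.det)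
    (hdet : M.det = 1) : Measure.map (matEquiv M h) volume = volume := by
  have h1 : ⇑(matEquiv M h) = ⇑(Matrix.toEuclideanLin M) := rfl
  rw [h1, Measure.map_linearMap_addHaar_eq_smul_addHaar volume
    (by rw [det_toEuclideanLin, hdet]; norm_num)]
  rw [det_toEuclideanLin, hdet]
  norm_num

end Support

set_option maxHeartbeats 1000000 in
theorem sscm_eigenvalues_bivariate
    (μ : EuclideanSpace ℝ (Fin 2)) (V : Matrix (Fin 2) (Fin 2) ℝ) (hV : V.PosDef)
    (g : ℝ → ℝ) (hg : ∀ t, 0 ≤ t → 0 ≤ g t)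
    (F : Measure (EuclideanSpace ℝ (Fin 2))) [IsProbabilityMeasure F]
    (hF : F = volume.withDensity fun x => ENNReal.ofReal
        ((Real.sqrt V.det)⁻¹ * g (∑ i, ∑ j, (x i - μ i) * V⁻¹ i j * (x j - μ j))))
    (U : Matrix (Fin 2) (Fin 2) ℝ) (hU : U * Uᵀ = 1)
    (lam : Fin 2 → ℝ) (hpos : 0 < lam 1) (hord : lam 1 ≤ lam 0)
    (hVdec : V = U * Matrix.diagonal lam * Uᵀ) :
    (Matrix.of fun i j => ∫ x, ssign (x - μ) i * ssign (x - μ) j ∂F)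
      = U * Matrix.diagonal
          (fun j => Real.sqrt (lam j) / (Real.sqrt (lam 0) + Real.sqrt (lam 1))) * Uᵀ := by
  have hpi : (0:ℝ) < π := Real.pi_pos
  have hp0 : 0 < lam 0 := lt_of_lt_of_le hpos hord
  set p := Real.sqrt (lam 0) with hpdef
  set q := Real.sqrt (lam 1) with hqdef
  have hp : 0 < p := Real.sqrt_pos.mpr hp0
  have hq : 0 < q := Real.sqrt_pos.mpr hpos
  set d : Fin 2 → ℝ := fun k => Real.sqrt (lam k) with hddef
  set A := U * Matrix.diagonal d with hAdef
  have hUtU : Uᵀ * U = 1 := mul_eq_one_comm.mp hU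
  have hUdet : U.det * U.det = 1 := by
    have h := congrArg Matrix.det hU
    rwa [Matrix.det_mul, Matrix.det_transpose, Matrix.det_one] at h
  have hUdet0 : U.det ≠ 0 := by
    intro h; rw [h] at hUdet; norm_num at hUdet
  have hAdet : A.det = U.det * (p * q) := by
    rw [hAdef, Matrix.det_mul, Matrix.det_diagonal, Fin.prod_univ_two]
  have hdA : IsUnit A.det := by
    rw [hAdet]
    exact isUnit_iff_ne_zero.mpr (mul_ne_zero hUdet0 (by positivity))
  have hdAT : IsUnit Aᵀ.det := by rwa [Matrix.det_transpose]
  have hlampos : ∀ k, 0 < lam k := by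
    intro k; rcases fin2cases k with rfl | rfl
    exacts [hp0, hpos]
  have hdd : Matrix.diagonal d * Matrix.diagonal d = Matrix.diagonal lam := by
    have hfun : (fun i => d i * d i) = lam := funext fun k => Real.mul_self_sqrt (hlampos k).le
    rw [Matrix.diagonal_mul_diagonal, hfun]
  have hVA : V = A * Aᵀ := by
    rw [hAdef, Matrix.transpose_mul, Matrix.diagonal_transpose, hVdec]
    rw [Matrix.mul_assoc, Matrix.mul_assoc, ← Matrix.mul_assoc (Matrix.diagonal d), hdd]
  set Rm : ℝ → Matrix (Fin 2) (Fin 2) ℝ :=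
    fun t => !![Real.cos t, -Real.sin t; Real.sin t, Real.cos t] with hRmdef
  have hRdet : ∀ t, (Rm t).det = 1 := by
    intro t
    simp [hRmdef, Matrix.det_fin_two_of]
    nlinarith [sin_sq_add_cos_sq t]
  have hRtR : ∀ t, (Rm t)ᵀ * Rm t = 1 := by
    intro t
    have hRT : (Rm t)ᵀ = !![Real.cos t, Real.sin t; -Real.sin t, Real.cos t] := by
      rw [hRmdef]; exact (Matrix.transposeᵣ_eq _).symm
    ext i j
    rcases fin2cases i with rfl | rfl <;> rcases fin2cases j with rfl | rfl <;>
      simp [hRT, hRmdef, Matrix.mul_apply, Fin.sum_univ_two, Matrix.one_apply] <;>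
      nlinarith [sin_sq_add_cos_sq t]
  set Tm : ℝ → Matrix (Fin 2) (Fin 2) ℝ := fun t => A * Rm t * A⁻¹ with hTmdef
  have hdT : ∀ t, (Tm t).det = 1 := by
    intro t
    rw [hTmdef]
    simp only [Matrix.det_mul, hRdet, Matrix.det_nonsing_inv]
    rw [Ring.inverse_eq_inv']
    field_simp [IsUnit.ne_zero hdA]
  have hdTu : ∀ t, IsUnit (Tm t).det := fun t => by rw [hdT]; exact isUnit_one
  set Qf : EuclideanSpace ℝ (Fin 2) → ℝ := fun y => ∑ i, ∑ j, y i * V⁻¹ i j * y j with hQfdef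
  have hTVT : ∀ t, (Tm t)ᵀ * V⁻¹ * Tm t = V⁻¹ := by
    intro t
    have hVinv : V⁻¹ = Aᵀ⁻¹ * A⁻¹ := by rw [hVA, Matrix.mul_inv_rev]
    have hT : Tm t = A * Rm t * A⁻¹ := rfl
    have hTt : (Tm t)ᵀ = (A⁻¹)ᵀ * ((Rm t)ᵀ * Aᵀ) := by
      rw [hT, Matrix.transpose_mul, Matrix.transpose_mul]
    rw [hVinv, hTt, Matrix.transpose_nonsing_inv, hT]
    simp only [Matrix.mul_assoc]
    rw [Matrix.mul_nonsing_inv_cancel_left _ _ hdAT, Matrix.nonsing_inv_mul_cancel_left _ _ hdA,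
      ← Matrix.mul_assoc ((Rm t)ᵀ), hRtR t, Matrix.one_mul]
  have hQT : ∀ (t : ℝ) (y : EuclideanSpace ℝ (Fin 2)),
      Qf (matEquiv (Tm t) (hdTu t) y) = Qf y := by
    intro t y
    show ∑ i, ∑ j, (Tm t *ᵥ y) i * V⁻¹ i j * (Tm t *ᵥ y) j = ∑ i, ∑ j, y i * V⁻¹ i j * y j
    rw [quadform, hTVT t]
  set dens : EuclideanSpace ℝ (Fin 2) → ENNReal :=
    fun y => ENNReal.ofReal ((Real.sqrt V.det)⁻¹ * g (Qf y)) with hdensdef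
  set ν := volume.withDensity dens with hνdef
  have hFν : F = ν.map (MeasurableEquiv.addRight μ) := by
    have hmapvol : Measure.map (MeasurableEquiv.addRight μ) volume = volume :=
      (measurePreserving_add_right volume μ).map_eq
    have h1 := map_withDensity_equiv volume (MeasurableEquiv.addRight μ)
      (fun x => ENNReal.ofReal
        ((Real.sqrt V.det)⁻¹ * g (∑ i, ∑ j, (x i - μ i) * V⁻¹ i j * (x j - μ j))))
    rw [hmapvol] at h1
    rw [hF, ← h1]
    congr 1
    rw [hνdef]
    congr 1
    funext y
    rw [hdensdef]
    simp only
    have hcoord : ∀ i : Fin 2, (MeasurableEquiv.addRight μ) y i - μ i = y i := by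
      intro i
      show y i + μ i - μ i = y i
      ring
    simp only [hcoord]
    rfl
  haveI hνP : IsProbabilityMeasure ν := by
    constructor
    have h1 : F Set.univ = 1 := measure_univ
    rw [hFν, MeasurableEquiv.map_apply] at h1
    simpa using h1
  have hνinv : ∀ t, ν.map (matEquiv (Tm t) (hdTu t)) = ν := by
    intro t
    have h1 := map_withDensity_equiv volume (matEquiv (Tm t) (hdTu t)) dens
    rw [map_matEquiv_volume (Tm t) (hdTu t) (hdT t)] at h1
    have hfun : (fun y => dens (matEquiv (Tm t) (hdTu t) y)) = dens := by
      funext y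
      rw [hdensdef]
      simp only
      rw [hQT t y]
    rw [hfun] at h1
    rw [hνdef]
    exact h1
  have hν0 : ν {(0 : EuclideanSpace ℝ (Fin 2))} = 0 :=
    withDensity_absolutelyContinuous volume dens (measure_singleton 0)
  have inner_eval : ∀ (i j : Fin 2) (y : EuclideanSpace ℝ (Fin 2)), y ≠ 0 →
      (∫ t in (-π)..π, matEquiv (Tm t) (hdTu t) y i * matEquiv (Tm t) (hdTu t) y j
          / (matEquiv (Tm t) (hdTu t) y 0 ^ 2 + matEquiv (Tm t) (hdTu t) y 1 ^ 2))
        = 2 * π * ((U * Matrix.diagonal (fun k => Real.sqrt (lam k) / (p + q)) * Uᵀ) i j) := by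
    intro i j y hy
    set z : Fin 2 → ℝ := A⁻¹ *ᵥ y with hzdef
    have hAz : A *ᵥ z = y := by
      rw [hzdef, Matrix.mulVec_mulVec, Matrix.mul_nonsing_inv _ hdA, Matrix.one_mulVec]
    have hzne : z 0 ≠ 0 ∨ z 1 ≠ 0 := by
      by_contra hcon
      push_neg at hcon
      apply hy
      rw [← WithLp.toLp_ofLp (x := y), ← hAz]
      have hz0 : z = 0 := by
        funext k
        rcases fin2cases k with rfl | rfl
        exacts [hcon.1, hcon.2]
      rw [hz0, Matrix.mulVec_zero]
      rfl
    set r := Real.sqrt (z 0 ^ 2 + z 1 ^ 2) with hrdef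
    have hrsq : 0 < z 0 ^ 2 + z 1 ^ 2 := by
      rcases hzne with h | h <;> positivity
    have hr : 0 < r := Real.sqrt_pos.mpr hrsq
    have hr2 : r ^ 2 = z 0 ^ 2 + z 1 ^ 2 := Real.sq_sqrt hrsq.le
    obtain ⟨φ, hcos, hsin⟩ := exists_angle (z 0 / r) (z 1 / r) (by
      field_simp
      exact hr2.symm)
    have hz0 : z 0 = r * Real.cos φ := by rw [hcos]; field_simp
    have hz1 : z 1 = r * Real.sin φ := by rw [hsin]; field_simp
    -- the unit-circle path pushed through A
    set w : ℝ → Fin 2 → ℝ := fun s => A *ᵥ ![Real.cos s, Real.sin s] with hwdef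
    have hkey : ∀ (t : ℝ) (k : Fin 2), matEquiv (Tm t) (hdTu t) y k = r * w (t + φ) k := by
      intro t k
      rw [matEquiv_apply]
      have h1 : Tm t *ᵥ y = A *ᵥ (Rm t *ᵥ z) := by
        rw [hTmdef]
        simp only
        rw [← Matrix.mulVec_mulVec, ← Matrix.mulVec_mulVec, hzdef]
      have hRz : Rm t *ᵥ z = fun k => r * ![Real.cos (t + φ), Real.sin (t + φ)] k := by
        funext l
        rcases fin2cases l with rfl | rfl <;>
          simp [hRmdef, Matrix.mulVec, dotProduct, Fin.sum_univ_two, Real.cos_add,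
            Real.sin_add, hz0, hz1] <;>
          ring
      have hsm : (fun k => r * ![Real.cos (t + φ), Real.sin (t + φ)] k)
          = r • ![Real.cos (t + φ), Real.sin (t + φ)] := rfl
      rw [h1, hRz, hsm, Matrix.mulVec_smul]
      rfl
    have hptwise : ∀ t : ℝ,
        matEquiv (Tm t) (hdTu t) y i * matEquiv (Tm t) (hdTu t) y j
          / (matEquiv (Tm t) (hdTu t) y 0 ^ 2 + matEquiv (Tm t) (hdTu t) y 1 ^ 2)
        = w (t + φ) i * w (t + φ) j / (w (t + φ) 0 ^ 2 + w (t + φ) 1 ^ 2) := by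
      intro t
      rw [hkey t i, hkey t j, hkey t 0, hkey t 1]
      rw [show (r * w (t + φ) 0) ^ 2 + (r * w (t + φ) 1) ^ 2
          = r ^ 2 * (w (t + φ) 0 ^ 2 + w (t + φ) 1 ^ 2) by ring,
        show r * w (t + φ) i * (r * w (t + φ) j) = r ^ 2 * (w (t + φ) i * w (t + φ) j) by ring,
        mul_div_mul_left _ _ (by positivity : (r:ℝ) ^ 2 ≠ 0)]
    rw [intervalIntegral.integral_congr (fun t _ => hptwise t)]
    set ψ : ℝ → ℝ := fun s => w s i * w s j / (w s 0 ^ 2 + w s 1 ^ 2) with hψdef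
    have hshift : (∫ t in (-π)..π, ψ (t + φ)) = ∫ t in (-π)..π, ψ t := by
      rw [intervalIntegral.integral_comp_add_right ψ φ]
      have hwa : ∀ s : ℝ, w s = A *ᵥ ![Real.cos s, Real.sin s] := fun _ => rfl
      have hper : Function.Periodic ψ (2 * π) := by
        intro s
        have hww : w (s + 2 * π) = w s := by
          rw [hwa, hwa, Real.cos_add_two_pi, Real.sin_add_two_pi]
        show w (s + 2 * π) i * w (s + 2 * π) j
            / (w (s + 2 * π) 0 ^ 2 + w (s + 2 * π) 1 ^ 2)
          = w s i * w s j / (w s 0 ^ 2 + w s 1 ^ 2)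
        rw [hww]
      have h2 := hper.intervalIntegral_add_eq (-π + φ) (-π)
      rw [show -π + φ + 2 * π = π + φ by ring, show -π + 2 * π = π by ring] at h2
      exact h2
    rw [hshift]
    -- expansion of w
    have h00 : U 0 0 * U 0 0 + U 1 0 * U 1 0 = 1 := by
      have h := congrFun (congrFun hUtU 0) 0
      simpa [Matrix.mul_apply, Matrix.transpose_apply, Fin.sum_univ_two, Matrix.one_apply] using h
    have h01 : U 0 0 * U 0 1 + U 1 0 * U 1 1 = 0 := by
      have h := congrFun (congrFun hUtU 0) 1
      simpa [Matrix.mul_apply, Matrix.transpose_apply, Fin.sum_univ_two, Matrix.one_apply] using h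
    have h11 : U 0 1 * U 0 1 + U 1 1 * U 1 1 = 1 := by
      have h := congrFun (congrFun hUtU 1) 1
      simpa [Matrix.mul_apply, Matrix.transpose_apply, Fin.sum_univ_two, Matrix.one_apply] using h
    have hw : ∀ (s : ℝ) (k : Fin 2),
        w s k = U k 0 * (p * Real.cos s) + U k 1 * (q * Real.sin s) := by
      intro s k
      rw [hwdef]
      simp only [hAdef]
      rw [← Matrix.mulVec_mulVec]
      have hdv : Matrix.diagonal d *ᵥ ![Real.cos s, Real.sin s]
          = ![p * Real.cos s, q * Real.sin s] := by
        funext l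
        rcases fin2cases l with rfl | rfl <;>
          simp [Matrix.mulVec, dotProduct, Fin.sum_univ_two, Matrix.diagonal, hddef,
            hpdef, hqdef]
      rw [hdv]
      simp [Matrix.mulVec, dotProduct, Fin.sum_univ_two]
    have hden : ∀ s : ℝ, w s 0 ^ 2 + w s 1 ^ 2
        = p ^ 2 * Real.cos s ^ 2 + q ^ 2 * Real.sin s ^ 2 := by
      intro s
      rw [hw, hw]
      linear_combination ((p * Real.cos s) ^ 2) * h00
        + (2 * (p * Real.cos s) * (q * Real.sin s)) * h01 + ((q * Real.sin s) ^ 2) * h11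
    have hsplit : ∀ s : ℝ, ψ s
        = U i 0 * U j 0 * (p ^ 2 * Real.cos s ^ 2 / (p ^ 2 * Real.cos s ^ 2 + q ^ 2 * Real.sin s ^ 2))
          + (U i 0 * U j 1 + U i 1 * U j 0)
            * (p * Real.cos s * (q * Real.sin s) / (p ^ 2 * Real.cos s ^ 2 + q ^ 2 * Real.sin s ^ 2))
          + U i 1 * U j 1 * (q ^ 2 * Real.sin s ^ 2 / (p ^ 2 * Real.cos s ^ 2 + q ^ 2 * Real.sin s ^ 2)) := by
      intro s
      have hD := sscm_Dpq_pos hp hq s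
      rw [hψdef]
      simp only
      rw [hden s, hw s i, hw s j]
      field_simp
      ring
    rw [intervalIntegral.integral_congr (fun s _ => hsplit s)]
    have hi1 : IntervalIntegrable (fun s => p ^ 2 * Real.cos s ^ 2
        / (p ^ 2 * Real.cos s ^ 2 + q ^ 2 * Real.sin s ^ 2)) MeasureTheory.volume (-π) π := by
      apply Continuous.intervalIntegrable
      exact (by fun_prop : Continuous fun s : ℝ => p ^ 2 * Real.cos s ^ 2).div
        (by fun_prop) (fun s => (sscm_Dpq_pos hp hq s).ne')
    have hi2 : IntervalIntegrable (fun s => p * Real.cos s * (q * Real.sin s)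
        / (p ^ 2 * Real.cos s ^ 2 + q ^ 2 * Real.sin s ^ 2)) MeasureTheory.volume (-π) π := by
      apply Continuous.intervalIntegrable
      exact (by fun_prop : Continuous fun s : ℝ => p * Real.cos s * (q * Real.sin s)).div
        (by fun_prop) (fun s => (sscm_Dpq_pos hp hq s).ne')
    have hi3 : IntervalIntegrable (fun s => q ^ 2 * Real.sin s ^ 2
        / (p ^ 2 * Real.cos s ^ 2 + q ^ 2 * Real.sin s ^ 2)) MeasureTheory.volume (-π) π := by
      apply Continuous.intervalIntegrable
      exact (by fun_prop : Continuous fun s : ℝ => q ^ 2 * Real.sin s ^ 2).div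
        (by fun_prop) (fun s => (sscm_Dpq_pos hp hq s).ne')
    rw [intervalIntegral.integral_add (((hi1.const_mul _).add (hi2.const_mul _))) (hi3.const_mul _),
      intervalIntegral.integral_add (hi1.const_mul _) (hi2.const_mul _),
      intervalIntegral.integral_const_mul, intervalIntegral.integral_const_mul,
      intervalIntegral.integral_const_mul, sscm_integral_M00 hq (by rw [hpdef, hqdef]; exact Real.sqrt_le_sqrt hord),
      sscm_integral_M01 hq (by rw [hpdef, hqdef]; exact Real.sqrt_le_sqrt hord),
      sscm_integral_M11 hq (by rw [hpdef, hqdef]; exact Real.sqrt_le_sqrt hord)]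
    have hexpand : (U * Matrix.diagonal (fun k => Real.sqrt (lam k) / (p + q)) * Uᵀ) i j
        = U i 0 * (p / (p + q)) * U j 0 + U i 1 * (q / (p + q)) * U j 1 := by
      simp [Matrix.mul_apply, Matrix.diagonal, Matrix.transpose_apply, Fin.sum_univ_two,
        ← hpdef, ← hqdef]
    rw [hexpand]
    ring
  -- entrywise
  ext i j
  rw [Matrix.of_apply]
  have hintg : ∀ x : EuclideanSpace ℝ (Fin 2),
      ssign ((MeasurableEquiv.addRight μ) x - μ) i * ssign ((MeasurableEquiv.addRight μ) x - μ) j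
        = x i * x j / (x 0 ^ 2 + x 1 ^ 2) := by
    intro x
    have h2 : (MeasurableEquiv.addRight μ) x - μ = x := by
      show x + μ - μ = x
      exact add_sub_cancel_right x μ
    rw [h2, ssign_apply_mul]
  rw [hFν, MeasureTheory.integral_map_equiv]
  simp_rw [hintg]
  set Gf : EuclideanSpace ℝ (Fin 2) → ℝ := fun v => v i * v j / (v 0 ^ 2 + v 1 ^ 2) with hGfdef
  have hGfa : ∀ v, Gf v = v i * v j / (v 0 ^ 2 + v 1 ^ 2) := fun _ => rfl
  set ent := (U * Matrix.diagonal (fun k => Real.sqrt (lam k) / (p + q)) * Uᵀ) i j with hent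
  have hGm : ∀ t : ℝ, (∫ y, Gf y ∂ν) = ∫ y, Gf (matEquiv (Tm t) (hdTu t) y) ∂ν := by
    intro t
    conv_lhs => rw [← hνinv t]
    rw [MeasureTheory.integral_map_equiv]
  have hcoordE : ∀ k : Fin 2, Measurable fun y : EuclideanSpace ℝ (Fin 2) => y k := fun k =>
    (measurable_pi_apply k).comp (WithLp.measurable_ofLp 2 (Fin 2 → ℝ))
  have hTent : ∀ k l : Fin 2, Continuous fun t => Tm t k l := by
    intro k l
    have hexp : ∀ t, Tm t k l
        = (A k 0 * Rm t 0 0 + A k 1 * Rm t 1 0) * A⁻¹ 0 l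
          + (A k 0 * Rm t 0 1 + A k 1 * Rm t 1 1) * A⁻¹ 1 l := by
      intro t
      show (A * Rm t * A⁻¹) k l = _
      simp [Matrix.mul_apply, Fin.sum_univ_two]
    simp_rw [hexp]
    have hc : ∀ a b : Fin 2, Continuous fun t : ℝ => Rm t a b := by
      intro a b
      have hre : ∀ t : ℝ, Rm t a b
          = !![Real.cos t, -Real.sin t; Real.sin t, Real.cos t] a b := fun _ => rfl
      simp_rw [hre]
      rcases fin2cases a with rfl | rfl <;> rcases fin2cases b with rfl | rfl <;>
        simp <;> fun_prop
    have := hc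
    fun_prop
  have hmc : ∀ k : Fin 2, Measurable fun z : ℝ × EuclideanSpace ℝ (Fin 2) =>
      matEquiv (Tm z.1) (hdTu z.1) z.2 k := by
    intro k
    have hre : (fun z : ℝ × EuclideanSpace ℝ (Fin 2) => matEquiv (Tm z.1) (hdTu z.1) z.2 k)
        = fun z => Tm z.1 k 0 * z.2 0 + Tm z.1 k 1 * z.2 1 := by
      funext z
      rw [matEquiv_apply]
      simp [Matrix.mulVec, dotProduct, Fin.sum_univ_two]
    rw [hre]
    exact (((hTent k 0).measurable.comp measurable_fst).mul
        ((hcoordE 0).comp measurable_snd)).add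
      (((hTent k 1).measurable.comp measurable_fst).mul ((hcoordE 1).comp measurable_snd))
  have hmeasH : Measurable fun z : ℝ × EuclideanSpace ℝ (Fin 2) =>
      Gf (matEquiv (Tm z.1) (hdTu z.1) z.2) := by
    simp_rw [hGfa]
    exact ((hmc i).mul (hmc j)).div (((hmc 0).pow_const 2).add ((hmc 1).pow_const 2))
  have hInt : Integrable (Function.uncurry fun t y => Gf (matEquiv (Tm t) (hdTu t) y))
      ((volume.restrict (Set.Ioc (-π) π)).prod ν) := by
    refine (integrable_const (1:ℝ)).mono' hmeasH.aestronglyMeasurable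
      (ae_of_all _ fun z => ?_)
    rw [Real.norm_eq_abs]
    show |Gf (matEquiv (Tm z.1) (hdTu z.1) z.2)| ≤ 1
    simpa [hGfa] using Gf_abs_le_one (matEquiv (Tm z.1) (hdTu z.1) z.2) i j
  have hswap := MeasureTheory.integral_integral_swap hInt
  have hL : (∫ t in Set.Ioc (-π) π, ∫ y, Gf (matEquiv (Tm t) (hdTu t) y) ∂ν)
      = (2 * π) * ∫ y, Gf y ∂ν := by
    have hconst : (fun t => ∫ y, Gf (matEquiv (Tm t) (hdTu t) y) ∂ν)
        = fun _ => ∫ y, Gf y ∂ν := funext fun t => (hGm t).symm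
    rw [hconst, MeasureTheory.setIntegral_const, measureReal_def, Real.volume_Ioc,
      ENNReal.toReal_ofReal (by linarith), smul_eq_mul]
    ring
  have hae : ∀ᵐ (y : EuclideanSpace ℝ (Fin 2)) ∂ν,
      (∫ t in Set.Ioc (-π) π, Gf (matEquiv (Tm t) (hdTu t) y)) = 2 * π * ent := by
    have hne : ∀ᵐ (y : EuclideanSpace ℝ (Fin 2)) ∂ν, y ≠ 0 := by
      rw [MeasureTheory.ae_iff]
      have hset : {y : EuclideanSpace ℝ (Fin 2) | ¬ y ≠ 0} = {0} := by
        ext v; simp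
      rw [hset]
      exact hν0
    filter_upwards [hne] with y hy
    rw [← intervalIntegral.integral_of_le (by linarith : -π ≤ π)]
    have := inner_eval i j y hy
    simp_rw [hGfa]
    rw [this, hent]
  have hR : (∫ y, (∫ t in Set.Ioc (-π) π, Gf (matEquiv (Tm t) (hdTu t) y)) ∂ν)
      = 2 * π * ent := by
    rw [MeasureTheory.integral_congr_ae hae, MeasureTheory.integral_const]
    simp
  have hfinal : (2 * π) * (∫ y, Gf y ∂ν) = (2 * π) * ent := by
    rw [← hL]
    rw [show (2:ℝ) * π * ent = 2 * π * ent by ring]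
    exact hswap.trans hR
  exact mul_left_cancel₀ (by positivity : (2 * π : ℝ) ≠ 0) hfinal
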